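/- Let A be a separable C*-algebra and D ⊆ A a weakly Cartan subalgebra. Suppose m ∈ N(D), φ ∈ supp°(m*m), and φ(m*m) = 1. Then for every a ∈ D' one has m* a m ∈ D', and there is an isomorphism of C*-algebras ι_m : D'/J_{α_m(φ)} → D'/J_φ such that ι_m(π_{α_m(φ)}(a)) = π_φ(m* a m) for all a ∈ D'. -/

import Mathlib

open WeakDual Filter Topology Classical
set_option linter.unusedSectionVars false
set_option linter.unnecessarySimpa false
set_option maxHeartbeats 1000000

variable {A : Type} [NonUnitalNormedRing A] [StarRing A] [CStarRing A]
  [NormedSpace ℂ A] [IsScalarTower ℂ A A] [SMulCommClass ℂ A A] [CompleteSpace A] [StarModule ℂ A]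

/-- Evaluation of a character of `D` at an element of `A` (taken to be `0` off `D`). -/
noncomputable def evalD (D : NonUnitalStarSubalgebra ℂ A) (φ : characterSpace ℂ D) (a : A) : ℂ :=
  if h : a ∈ D then φ (⟨a, h⟩ : D) else 0

/-- The open support `supp°(a) = {φ ∈ D̂ : φ(a) ≠ 0}`. -/
def suppo (D : NonUnitalStarSubalgebra ℂ A) (a : A) : Set (characterSpace ℂ D) :=
  {φ | evalD D φ a ≠ 0}

/-- `n` is a normaliser of `D` in `A`. -/
def IsNormalizer (D : NonUnitalStarSubalgebra ℂ A) (n : A) : Prop :=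
  ∀ d ∈ D, n * d * star n ∈ D ∧ star n * d * n ∈ D

/-- `S` contains an approximate unit for `A`: there is a net in `S` converging
multiplicatively to the identity on every element of `A`. -/
def HasApproxUnit (S : Set A) : Prop :=
  ∃ (ι : Type) (l : Filter ι) (e : ι → A), l.NeBot ∧ (∀ i, e i ∈ S) ∧
    ∀ a : A, Tendsto (fun i => e i * a) l (nhds a) ∧ Tendsto (fun i => a * e i) l (nhds a)

/-- `α` is "the" homeomorphism `α_n : supp°(n*n) → supp°(nn*)` attached to a normaliser `n`,
i.e. a partial homeomorphism of `D̂` with source `supp°(n*n)`, target `supp°(nn*)`, and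
satisfying `φ(n*n)·(α_n φ)(d) = φ(n* d n)` for all `φ` in the source and `d ∈ D`. -/
def IsWeylHomeo (D : NonUnitalStarSubalgebra ℂ A) (n : A)
    (α : PartialHomeomorph (characterSpace ℂ D) (characterSpace ℂ D)) : Prop :=
  α.source = suppo D (star n * n) ∧ α.target = suppo D (n * star n) ∧
  ∀ φ ∈ α.source, ∀ d ∈ D, evalD D φ (star n * n) * evalD D (α φ) d = evalD D φ (star n * d * n)

/-- The relative commutant `D' = {a ∈ A : a d = d a for all d ∈ D}`, as a set. -/
def commutantSet (D : NonUnitalStarSubalgebra ℂ A) : Set A := {a | ∀ d ∈ D, a * d = d * a}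

/-- The ideal `J_φ ⊆ D'`: the closure of `(ker φ)·D'`. -/
noncomputable def Jset (D : NonUnitalStarSubalgebra ℂ A) (φ : characterSpace ℂ D) : Set A :=
  closure ((Submodule.span ℂ {x : A | ∃ k ∈ (D : Set A), ∃ a ∈ commutantSet D,
    evalD D φ k = 0 ∧ x = k * a} : Submodule ℂ A) : Set A)

/-- `e ∈ D'` represents the unit of `D'/J_φ`. -/
def IsUnitModJ (D : NonUnitalStarSubalgebra ℂ A) (φ : characterSpace ℂ D) (e : A) : Prop :=
  e ∈ commutantSet D ∧ ∀ a ∈ commutantSet D, e * a - a ∈ Jset D φ ∧ a * e - a ∈ Jset D φ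

/-- `D` is a weakly Cartan subalgebra of `A`. -/
def IsWeaklyCartan (D : NonUnitalStarSubalgebra ℂ A) : Prop :=
  IsClosed (D : Set A) ∧ (∀ x ∈ D, ∀ y ∈ D, x * y = y * x) ∧ HasApproxUnit (D : Set A) ∧
  (∀ φ : characterSpace ℂ D, ∃ e, IsUnitModJ D φ e) ∧
  (∀ φ : characterSpace ℂ D, ∃ d ∈ D, ∃ U : Set (characterSpace ℂ D),
    IsOpen U ∧ φ ∈ U ∧ ∀ ψ ∈ U, IsUnitModJ D ψ d)

/-- The relative commutant `D'` as a non-unital star subalgebra of `A`. -/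
def commutantAlg (D : NonUnitalStarSubalgebra ℂ A) : NonUnitalStarSubalgebra ℂ A where
  carrier := commutantSet D
  add_mem' := by
    intro a b ha hb d hd
    simp only [commutantSet, Set.mem_setOf_eq] at *
    rw [add_mul, mul_add, ha d hd, hb d hd]
  zero_mem' := by
    intro d _
    rw [zero_mul, mul_zero]
  mul_mem' := by
    intro a b ha hb d hd
    calc a * b * d = a * (b * d) := by rw [mul_assoc]
      _ = a * (d * b) := by rw [hb d hd]
      _ = a * d * b := by rw [mul_assoc]
      _ = d * a * b := by rw [ha d hd]
      _ = d * (a * b) := by rw [mul_assoc]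
  smul_mem' := by
    intro c a ha d hd
    rw [smul_mul_assoc, ha d hd, mul_smul_comm]
  star_mem' := by
    intro a ha d hd
    calc star a * d = star (star d * a) := by rw [star_mul, star_star]
      _ = star (a * star d) := by rw [← ha (star d) (star_mem hd)]
      _ = d * star a := by rw [star_mul, star_star]

/-- `w` is a representative in `A` of the unitary `U^φ_{n*m}` of `D'/J_φ`:
`w = φ(m*m)^{-1/2}·φ(n*n)^{-1/2}·(d n* m d)` for some admissible `U` and `d`. -/
noncomputable def WeylRep (D : NonUnitalStarSubalgebra ℂ A) (n m : A)
    (φ : characterSpace ℂ D) (w : A) : Prop :=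
  ∃ U : Set (characterSpace ℂ D), IsOpen U ∧ φ ∈ U ∧
    U ⊆ suppo D (star n * n) ∩ suppo D (star m * m) ∧
    (∃ αn αm : PartialHomeomorph (characterSpace ℂ D) (characterSpace ℂ D),
       IsWeylHomeo D n αn ∧ IsWeylHomeo D m αm ∧ Set.EqOn ⇑αn ⇑αm U) ∧
    ∃ d ∈ (D : Set A), suppo D d ⊆ U ∧ evalD D φ d = 1 ∧
      w = (evalD D φ (star m * m) ^ (-(1/2) : ℂ) * evalD D φ (star n * n) ^ (-(1/2) : ℂ)) •
        (d * (star n * m) * d)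

/-- The unitary `U^φ_{n*m}` of `D'/J_φ` lies in the connected component of the identity of
the unitary group of `D'/J_φ`; the quotient `D'/J_φ` is represented by an arbitrary
surjective star-homomorphism `π` from `D'` onto a unital C*-algebra `Q` with kernel `J_φ`. -/
noncomputable def InU0 (D : NonUnitalStarSubalgebra ℂ A) (n m : A)
    (φ : characterSpace ℂ D) : Prop :=
  ∀ (Q : Type) [NormedRing Q] [StarRing Q] [CStarRing Q] [NormedAlgebra ℂ Q]
    [CompleteSpace Q] [StarModule ℂ Q] (π : commutantAlg D →⋆ₙₐ[ℂ] Q),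
    Function.Surjective ⇑π →
    (∀ a : commutantAlg D, π a = 0 ↔ (a : A) ∈ Jset D φ) →
    ∃ w : commutantAlg D, WeylRep D n m φ (w : A) ∧
      ∃ hu : π w ∈ unitary Q, (⟨π w, hu⟩ : unitary Q) ∈ connectedComponent (1 : unitary Q)

/-- The relation `(n, φ) ∼ (m, ψ)` of Lemma 4.7 (for the trivial coaction). -/
noncomputable def WeylSimRaw (D : NonUnitalStarSubalgebra ℂ A) (n : A)
    (φ : characterSpace ℂ D) (m : A) (ψ : characterSpace ℂ D) : Prop :=
  φ = ψ ∧
  (∃ U : Set (characterSpace ℂ D), IsOpen U ∧ φ ∈ U ∧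
    U ⊆ suppo D (star n * n) ∩ suppo D (star m * m) ∧
    ∃ αn αm : PartialHomeomorph (characterSpace ℂ D) (characterSpace ℂ D),
      IsWeylHomeo D n αn ∧ IsWeylHomeo D m αm ∧ Set.EqOn ⇑αn ⇑αm U) ∧
  InU0 D n m φ

/-- The set of pairs `(n, φ)` with `n ∈ N(D)` and `φ ∈ supp°(n*n)`. -/
def WeylPair (D : NonUnitalStarSubalgebra ℂ A) : Type :=
  {p : A × characterSpace ℂ D // IsNormalizer D p.1 ∧ p.2 ∈ suppo D (star p.1 * p.1)}

section Helpers

variable (D : NonUnitalStarSubalgebra ℂ A)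

lemma evalD_of_mem {x : A} (hx : x ∈ D) (φ : characterSpace ℂ D) :
    evalD D φ x = φ (⟨x, hx⟩ : D) := dif_pos hx

lemma evalD_mul (φ : characterSpace ℂ D) {x y : A} (hx : x ∈ D) (hy : y ∈ D) :
    evalD D φ (x * y) = evalD D φ x * evalD D φ y := by
  rw [evalD_of_mem D (mul_mem hx hy), evalD_of_mem D hx, evalD_of_mem D hy]
  have h : (⟨x * y, mul_mem hx hy⟩ : D) = ⟨x, hx⟩ * ⟨y, hy⟩ := rfl
  rw [h, map_mul]

lemma evalD_sub (φ : characterSpace ℂ D) {x y : A} (hx : x ∈ D) (hy : y ∈ D) :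
    evalD D φ (x - y) = evalD D φ x - evalD D φ y := by
  rw [evalD_of_mem D (sub_mem hx hy), evalD_of_mem D hx, evalD_of_mem D hy]
  have h : (⟨x - y, sub_mem hx hy⟩ : D) = ⟨x, hx⟩ - ⟨y, hy⟩ := rfl
  rw [h, map_sub]

lemma commutant_mul {a b : A} (ha : a ∈ commutantSet D) (hb : b ∈ commutantSet D) :
    a * b ∈ commutantSet D := by
  intro d hd
  calc a * b * d = a * (b * d) := by rw [mul_assoc]
    _ = a * (d * b) := by rw [hb d hd]
    _ = a * d * b := by rw [mul_assoc]
    _ = d * a * b := by rw [ha d hd]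
    _ = d * (a * b) := by rw [mul_assoc]

/-- The span used in the definition of `Jset`. -/
noncomputable def Jspan (φ : characterSpace ℂ D) : Submodule ℂ A :=
  Submodule.span ℂ {x : A | ∃ k ∈ (D : Set A), ∃ a ∈ commutantSet D,
    evalD D φ k = 0 ∧ x = k * a}

lemma Jset_eq (φ : characterSpace ℂ D) :
    Jset D φ = ((Jspan D φ).topologicalClosure : Set A) :=
  (Submodule.topologicalClosure_coe _).symm

lemma Jset_isClosed (φ : characterSpace ℂ D) : IsClosed (Jset D φ) := isClosed_closure

lemma Jset_zero (φ : characterSpace ℂ D) : (0 : A) ∈ Jset D φ := by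
  rw [Jset_eq]; exact Submodule.zero_mem _

lemma Jset_add (φ : characterSpace ℂ D) {x y : A} (hx : x ∈ Jset D φ) (hy : y ∈ Jset D φ) :
    x + y ∈ Jset D φ := by
  rw [Jset_eq] at hx hy ⊢; exact Submodule.add_mem _ hx hy

lemma Jset_sub (φ : characterSpace ℂ D) {x y : A} (hx : x ∈ Jset D φ) (hy : y ∈ Jset D φ) :
    x - y ∈ Jset D φ := by
  rw [Jset_eq] at hx hy ⊢; exact Submodule.sub_mem _ hx hy

lemma Jset_neg (φ : characterSpace ℂ D) {x : A} (hx : x ∈ Jset D φ) :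
    -x ∈ Jset D φ := by
  rw [Jset_eq] at hx ⊢; exact Submodule.neg_mem _ hx

lemma Jset_smul (φ : characterSpace ℂ D) (c : ℂ) {x : A} (hx : x ∈ Jset D φ) :
    c • x ∈ Jset D φ := by
  rw [Jset_eq] at hx ⊢; exact Submodule.smul_mem _ _ hx

lemma Jset_gen (φ : characterSpace ℂ D) {k c : A} (hk : k ∈ D) (hk0 : evalD D φ k = 0)
    (hc : c ∈ commutantSet D) : k * c ∈ Jset D φ :=
  subset_closure (Submodule.subset_span ⟨k, hk, c, hc, hk0, rfl⟩)

lemma Jset_mul_left (φ : characterSpace ℂ D) {c j : A} (hc : c ∈ commutantSet D)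
    (hj : j ∈ Jset D φ) : c * j ∈ Jset D φ := by
  have hspan : ∀ x ∈ Jspan D φ, c * x ∈ (Jspan D φ : Set A) := by
    intro x hx
    induction hx using Submodule.span_induction with
    | mem x hxs =>
        obtain ⟨k, hk, a, ha, hk0, rfl⟩ := hxs
        have : c * (k * a) = k * (c * a) := by
          calc c * (k * a) = c * k * a := by rw [mul_assoc]
            _ = k * c * a := by rw [hc k hk]
            _ = k * (c * a) := by rw [mul_assoc]
        rw [this]
        exact Submodule.subset_span ⟨k, hk, c * a, commutant_mul D hc ha, hk0, rfl⟩
    | zero => simpa using (Jspan D φ).zero_mem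
    | add x y hx' hy' ihx ihy => rw [mul_add]; exact (Jspan D φ).add_mem ihx ihy
    | smul t x hx' ihx => rw [mul_smul_comm]; exact (Jspan D φ).smul_mem t ihx
  have hmaps : Set.MapsTo (fun x => c * x) ((Jspan D φ : Set A)) ((Jspan D φ : Set A)) := hspan
  exact hmaps.closure (continuous_const.mul continuous_id) hj

lemma commutantSet_isClosed : IsClosed (commutantSet D) := by
  have h : commutantSet D = ⋂ d ∈ (D : Set A), {a : A | a * d = d * a} := by
    ext a; simp [commutantSet]
  rw [h]
  exact isClosed_biInter fun d _ =>
    isClosed_eq (continuous_id.mul continuous_const) (continuous_const.mul continuous_id)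

/-- Part 1: conjugation by a normaliser preserves the relative commutant. -/
lemma conj_mem_commutant (habel : ∀ x ∈ D, ∀ y ∈ D, x * y = y * x)
    {n : A} (hn : IsNormalizer D n) (hsnn : star n * n ∈ D) (hnsn : n * star n ∈ D)
    {a : A} (ha : a ∈ commutantSet D) : star n * a * n ∈ commutantSet D := by
  intro d hd
  set x : A := (star n * a * n) * d - d * (star n * a * n) with hxdef
  have h1a : (star n * a * n) * d * (star n * n) = (star n * n) * (d * (star n * a * n)) := by
    calc (star n * a * n) * d * (star n * n)
        = star n * (a * (n * d * star n)) * n := by simp only [mul_assoc]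
      _ = star n * ((n * d * star n) * a) * n := by rw [ha _ (hn d hd).1]
      _ = (star n * n) * (d * (star n * a * n)) := by simp only [mul_assoc]
  have h1b : d * (star n * a * n) * (star n * n) = (star n * n) * (d * (star n * a * n)) := by
    calc d * (star n * a * n) * (star n * n)
        = d * star n * (a * (n * star n)) * n := by simp only [mul_assoc]
      _ = d * star n * ((n * star n) * a) * n := by
          rw [ha (n * star n) hnsn]
      _ = d * (star n * n) * (star n * a * n) := by simp only [mul_assoc]
      _ = (star n * n) * d * (star n * a * n) := by rw [habel d hd (star n * n) hsnn]
      _ = (star n * n) * (d * (star n * a * n)) := by simp only [mul_assoc]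
  -- x * (star n * n) = 0
  have h1 : x * (star n * n) = 0 := by
    rw [hxdef, sub_mul, h1a, h1b, sub_self]
  -- x * star n = 0 via the C*-identity
  have h2 : x * star n = 0 := by
    have hz : (x * star n) * star (x * star n) = 0 := by
      rw [star_mul, star_star]
      calc x * star n * (n * star x) = x * (star n * n) * star x := by simp only [mul_assoc]
        _ = 0 := by rw [h1, zero_mul]
    have hnorm : ‖x * star n‖ * ‖x * star n‖ = 0 := by
      rw [← CStarRing.norm_self_mul_star, hz, norm_zero]
    exact norm_eq_zero.mp (mul_self_eq_zero.mp hnorm)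
  -- x * (star d * star n) = 0 by direct computation
  have h3a : (star n * a * n) * d * (star d * star n)
      = (star n * n) * ((d * star d) * (star n * a)) := by
    calc (star n * a * n) * d * (star d * star n)
        = star n * (a * (n * (d * star d) * star n)) := by simp only [mul_assoc]
      _ = star n * ((n * (d * star d) * star n) * a) := by
          rw [ha _ (hn (d * star d) (mul_mem hd (star_mem hd))).1]
      _ = (star n * n) * ((d * star d) * (star n * a)) := by simp only [mul_assoc]
  have h3b : d * (star n * a * n) * (star d * star n)
      = (star n * n) * ((d * star d) * (star n * a)) := by
    calc d * (star n * a * n) * (star d * star n)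
        = d * star n * (a * (n * star d * star n)) := by simp only [mul_assoc]
      _ = d * star n * ((n * star d * star n) * a) := by
          rw [ha _ (hn (star d) (star_mem hd)).1]
      _ = d * (star n * n) * (star d * (star n * a)) := by simp only [mul_assoc]
      _ = (star n * n) * d * (star d * (star n * a)) := by rw [habel d hd (star n * n) hsnn]
      _ = (star n * n) * ((d * star d) * (star n * a)) := by simp only [mul_assoc]
  have h3 : x * (star d * star n) = 0 := by
    rw [hxdef, sub_mul, h3a, h3b, sub_self]
  -- x * star x = 0
  have hstarx : star x = star d * (star n * (star a * n)) - star n * (star a * (n * star d)) := by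
    simp only [hxdef, star_sub, star_mul, star_star, mul_assoc]
  have h4 : x * star x = 0 := by
    rw [hstarx, mul_sub]
    have t1 : x * (star d * (star n * (star a * n))) = x * (star d * star n) * (star a * n) := by
      simp only [mul_assoc]
    have t2 : x * (star n * (star a * (n * star d))) = x * star n * (star a * (n * star d)) := by
      simp only [mul_assoc]
    rw [t1, t2, h3, h2, zero_mul, zero_mul, sub_self]
  have hx0 : x = 0 := by
    have hnorm : ‖x‖ * ‖x‖ = 0 := by rw [← CStarRing.norm_self_mul_star, h4, norm_zero]
    exact norm_eq_zero.mp (mul_self_eq_zero.mp hnorm)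
  exact sub_eq_zero.mp hx0


lemma unit_one_cancel (habel : ∀ x ∈ D, ∀ y ∈ D, x * y = y * x)
    (χ : characterSpace ℂ D) (hex : ∃ d ∈ (D : Set A), IsUnitModJ D χ d)
    {k : A} (hk : k ∈ D) (hk1 : evalD D χ k = 1)
    {c : A} (hc : c ∈ commutantSet D) : k * c - c ∈ Jset D χ := by
  obtain ⟨d, hdD, hdc, hdu⟩ := hex
  have hkc : k ∈ commutantSet D := fun y hy => habel k hk y hy
  have t1 : (k * d - d) * c ∈ Jset D χ := by
    refine Jset_gen D χ (sub_mem (mul_mem hk hdD) hdD) ?_ hc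
    rw [evalD_sub D χ (mul_mem hk hdD) hdD, evalD_mul D χ hk hdD, hk1, one_mul, sub_self]
  have t2 : d * c - c ∈ Jset D χ := (hdu c hc).1
  have t3 : k * (c - d * c) ∈ Jset D χ := by
    refine Jset_mul_left D χ hkc ?_
    have h := Jset_neg D χ t2
    rwa [neg_sub] at h
  have hiden : k * c - c = ((k * d - d) * c + k * (c - d * c)) + (d * c - c) := by
    simp only [mul_sub, sub_mul, mul_assoc]
    abel
  rw [hiden]
  exact Jset_add D χ (Jset_add D χ t1 t3) t2

end Helpers

theorem statement_10 [TopologicalSpace.SeparableSpace A]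
    (D : NonUnitalStarSubalgebra ℂ A) (hD : IsWeaklyCartan D)
    (m : A) (hm : IsNormalizer D m)
    (αm : PartialHomeomorph (characterSpace ℂ D) (characterSpace ℂ D))
    (hαm : IsWeylHomeo D m αm)
    (φ : characterSpace ℂ D) (hφ : φ ∈ suppo D (star m * m))
    (hφ1 : evalD D φ (star m * m) = 1) :
    (∀ a ∈ commutantSet D, star m * a * m ∈ commutantSet D) ∧
    ∀ (Q₁ Q₂ : Type)
      [NonUnitalNormedRing Q₁] [StarRing Q₁] [CStarRing Q₁] [NormedSpace ℂ Q₁]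
      [IsScalarTower ℂ Q₁ Q₁] [SMulCommClass ℂ Q₁ Q₁] [CompleteSpace Q₁] [StarModule ℂ Q₁]
      [NonUnitalNormedRing Q₂] [StarRing Q₂] [CStarRing Q₂] [NormedSpace ℂ Q₂]
      [IsScalarTower ℂ Q₂ Q₂] [SMulCommClass ℂ Q₂ Q₂] [CompleteSpace Q₂] [StarModule ℂ Q₂]
      (π₁ : commutantAlg D →⋆ₙₐ[ℂ] Q₁) (π₂ : commutantAlg D →⋆ₙₐ[ℂ] Q₂),
      Function.Surjective ⇑π₁ →
      (∀ a : commutantAlg D, π₁ a = 0 ↔ (a : A) ∈ Jset D (αm φ)) →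
      Function.Surjective ⇑π₂ →
      (∀ a : commutantAlg D, π₂ a = 0 ↔ (a : A) ∈ Jset D φ) →
      ∃ ι : Q₁ ≃⋆ₐ[ℂ] Q₂,
        ∀ a b : commutantAlg D, (b : A) = star m * (a : A) * m → ι (π₁ a) = π₂ b := by
  obtain ⟨hclosed, habel, happrox, hunit, hlocunit⟩ := hD
  obtain ⟨I, l, e, hne, heD, happ⟩ := happrox
  haveI := hne
  have hmmD : star m * m ∈ D := by
    have ht : Tendsto (fun i => star m * (e i * m)) l (nhds (star m * m)) :=
      ((happ m).1.const_mul (star m))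
    refine hclosed.mem_of_tendsto ht (Filter.Eventually.of_forall fun i => ?_)
    simpa [mul_assoc] using (hm (e i) (heD i)).2
  have hmmD' : m * star m ∈ D := by
    have ht : Tendsto (fun i => m * (e i * star m)) l (nhds (m * star m)) :=
      ((happ (star m)).1.const_mul m)
    refine hclosed.mem_of_tendsto ht (Filter.Eventually.of_forall fun i => ?_)
    simpa [mul_assoc] using (hm (e i) (heD i)).1
  have hm' : IsNormalizer D (star m) := by
    intro d hd
    constructor
    · simpa [star_star] using (hm d hd).2
    · simpa [star_star] using (hm d hd).1
  have part1 : ∀ a ∈ commutantSet D, star m * a * m ∈ commutantSet D :=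
    fun a ha => conj_mem_commutant D habel hm hmmD hmmD' ha
  have part1' : ∀ a ∈ commutantSet D, m * a * star m ∈ commutantSet D := by
    intro a ha
    have h := conj_mem_commutant D habel hm' (by simpa [star_star] using hmmD')
      (by simpa [star_star] using hmmD) ha
    simpa [star_star] using h
  refine ⟨part1, ?_⟩
  intro Q₁ Q₂ _ _ _ _ _ _ _ _ _ _ _ _ _ _ _ _ π₁ π₂ hs₁ hk₁ hs₂ hk₂
  set ψ := αm φ with hψdef
  have hsrc : φ ∈ αm.source := by rw [hαm.1]; exact hφ
  have hψeval : ∀ d' ∈ D, evalD D ψ d' = evalD D φ (star m * d' * m) := by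
    intro d' hd'
    have h := hαm.2.2 φ hsrc d' hd'
    rwa [hφ1, one_mul] at h
  have hψ1 : evalD D ψ (m * star m) = 1 := by
    rw [hψeval _ hmmD']
    have he : star m * (m * star m) * m = (star m * m) * (star m * m) := by
      simp only [mul_assoc]
    rw [he, evalD_mul D φ hmmD hmmD, hφ1, one_mul]
  have hexφ : ∃ d ∈ (D : Set A), IsUnitModJ D φ d := by
    obtain ⟨d, hdD, U, _, hφU, hU⟩ := hlocunit φ
    exact ⟨d, hdD, hU φ hφU⟩
  have hexψ : ∃ d ∈ (D : Set A), IsUnitModJ D ψ d := by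
    obtain ⟨d, hdD, U, _, hψU, hU⟩ := hlocunit ψ
    exact ⟨d, hdD, hU ψ hψU⟩
  have cancelφ : ∀ c ∈ commutantSet D, (star m * m) * c - c ∈ Jset D φ :=
    fun c hc => unit_one_cancel D habel φ hexφ hmmD hφ1 hc
  have cancelφ' : ∀ c ∈ commutantSet D, c * (star m * m) - c ∈ Jset D φ := by
    intro c hc
    rw [hc _ hmmD]
    exact cancelφ c hc
  have cancelψ : ∀ c ∈ commutantSet D, (m * star m) * c - c ∈ Jset D ψ :=
    fun c hc => unit_one_cancel D habel ψ hexψ hmmD' hψ1 hc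
  have cancelψ' : ∀ c ∈ commutantSet D, c * (m * star m) - c ∈ Jset D ψ := by
    intro c hc
    rw [hc _ hmmD']
    exact cancelψ c hc
  have hDsub : ∀ k ∈ D, k ∈ commutantSet D := fun k hk y hy => habel k hk y hy
  have conjJ : ∀ j ∈ Jset D ψ, star m * j * m ∈ Jset D φ := by
    intro j hj
    have hgen : ∀ x ∈ Jspan D ψ, star m * x * m ∈ Jset D φ := by
      intro x hx
      induction hx using Submodule.span_induction with
      | mem x hxs =>
          obtain ⟨k, hk, c, hc, hk0, rfl⟩ := hxs
          have hkD : star m * k * m ∈ D := (hm k hk).2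
          have hk0' : evalD D φ (star m * k * m) = 0 := by
            rw [← hψeval k hk]; exact hk0
          have hcD : star m * c * m ∈ commutantSet D := part1 c hc
          have hkcD : star m * (k * c) * m ∈ commutantSet D :=
            part1 (k * c) (commutant_mul D (hDsub k hk) hc)
          have hid : (star m * k * m) * (star m * c * m)
              = (star m * (k * c) * m) * (star m * m) := by
            calc (star m * k * m) * (star m * c * m)
                = star m * k * ((m * star m) * c) * m := by simp only [mul_assoc]
              _ = star m * k * (c * (m * star m)) * m := by rw [← hc _ hmmD']
              _ = (star m * (k * c) * m) * (star m * m) := by simp only [mul_assoc]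
          have hmem1 : (star m * (k * c) * m) * (star m * m) ∈ Jset D φ := by
            rw [← hid]
            exact Jset_gen D φ hkD hk0' hcD
          have h2 := Jset_sub D φ hmem1 (cancelφ' _ hkcD)
          simpa using h2
      | zero => simpa using Jset_zero D φ
      | add x y hx' hy' ihx ihy =>
          have h : star m * (x + y) * m = star m * x * m + star m * y * m := by
            rw [mul_add, add_mul]
          rw [h]; exact Jset_add D φ ihx ihy
      | smul t x hx' ihx =>
          have h : star m * (t • x) * m = t • (star m * x * m) := by
            rw [mul_smul_comm, smul_mul_assoc]
          rw [h]; exact Jset_smul D φ t ihx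
    have hmaps : Set.MapsTo (fun x => star m * x * m) ((Jspan D ψ : Set A)) (Jset D φ) := hgen
    have hcont : Continuous fun x : A => star m * x * m :=
      (continuous_const.mul continuous_id).mul continuous_const
    have h2 := hmaps.closure hcont hj
    rwa [(Jset_isClosed D φ).closure_eq] at h2
  have conjJ' : ∀ j ∈ Jset D φ, m * j * star m ∈ Jset D ψ := by
    intro j hj
    have hgen : ∀ x ∈ Jspan D φ, m * x * star m ∈ Jset D ψ := by
      intro x hx
      induction hx using Submodule.span_induction with
      | mem x hxs =>
          obtain ⟨k, hk, c, hc, hk0, rfl⟩ := hxs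
          have hkD : m * k * star m ∈ D := (hm k hk).1
          have hk0' : evalD D ψ (m * k * star m) = 0 := by
            rw [hψeval _ hkD]
            have he : star m * (m * k * star m) * m = (star m * m) * (k * (star m * m)) := by
              simp only [mul_assoc]
            rw [he, evalD_mul D φ hmmD (mul_mem hk hmmD), evalD_mul D φ hk hmmD, hk0,
              zero_mul, mul_zero]
          have hcD : m * c * star m ∈ commutantSet D := part1' c hc
          have hkcD : m * (k * c) * star m ∈ commutantSet D :=
            part1' (k * c) (commutant_mul D (hDsub k hk) hc)
          have hid : (m * k * star m) * (m * c * star m)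
              = (m * (k * c) * star m) * (m * star m) := by
            calc (m * k * star m) * (m * c * star m)
                = m * k * ((star m * m) * c) * star m := by simp only [mul_assoc]
              _ = m * k * (c * (star m * m)) * star m := by rw [← hc _ hmmD]
              _ = (m * (k * c) * star m) * (m * star m) := by simp only [mul_assoc]
          have hmem1 : (m * (k * c) * star m) * (m * star m) ∈ Jset D ψ := by
            rw [← hid]
            exact Jset_gen D ψ hkD hk0' hcD
          have h2 := Jset_sub D ψ hmem1 (cancelψ' _ hkcD)
          simpa using h2
      | zero => simpa using Jset_zero D ψ
      | add x y hx' hy' ihx ihy =>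
          have h : m * (x + y) * star m = m * x * star m + m * y * star m := by
            rw [mul_add, add_mul]
          rw [h]; exact Jset_add D ψ ihx ihy
      | smul t x hx' ihx =>
          have h : m * (t • x) * star m = t • (m * x * star m) := by
            rw [mul_smul_comm, smul_mul_assoc]
          rw [h]; exact Jset_smul D ψ t ihx
    have hmaps : Set.MapsTo (fun x => m * x * star m) ((Jspan D φ : Set A)) (Jset D ψ) := hgen
    have hcont : Continuous fun x : A => m * x * star m :=
      (continuous_const.mul continuous_id).mul continuous_const
    have h2 := hmaps.closure hcont hj
    rwa [(Jset_isClosed D ψ).closure_eq] at h2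
  let C₁ : commutantAlg D → commutantAlg D := fun a => ⟨star m * (a : A) * m, part1 _ a.2⟩
  let C₂ : commutantAlg D → commutantAlg D := fun a => ⟨m * (a : A) * star m, part1' _ a.2⟩
  have hπ₂eq : ∀ a b : commutantAlg D, ((a : A) - (b : A)) ∈ Jset D ψ →
      π₂ (C₁ a) = π₂ (C₁ b) := by
    intro a b hab
    have h0 : π₂ (C₁ a - C₁ b) = 0 := by
      rw [hk₂]
      have hc : ((C₁ a - C₁ b : commutantAlg D) : A) = star m * ((a : A) - (b : A)) * m := by
        show (star m * (a : A) * m) - (star m * (b : A) * m) = _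
        rw [mul_sub, sub_mul]
      rw [hc]
      exact conjJ _ hab
    rw [map_sub] at h0
    exact sub_eq_zero.mp h0
  have hπ₁eq : ∀ a b : commutantAlg D, ((a : A) - (b : A)) ∈ Jset D φ →
      π₁ (C₂ a) = π₁ (C₂ b) := by
    intro a b hab
    have h0 : π₁ (C₂ a - C₂ b) = 0 := by
      rw [hk₁]
      have hc : ((C₂ a - C₂ b : commutantAlg D) : A) = m * ((a : A) - (b : A)) * star m := by
        show (m * (a : A) * star m) - (m * (b : A) * star m) = _
        rw [mul_sub, sub_mul]
      rw [hc]
      exact conjJ' _ hab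
    rw [map_sub] at h0
    exact sub_eq_zero.mp h0
  let f : Q₁ → Q₂ := fun q => π₂ (C₁ (Function.surjInv hs₁ q))
  let g : Q₂ → Q₁ := fun q => π₁ (C₂ (Function.surjInv hs₂ q))
  have hsub₁ : ∀ a b : commutantAlg D, π₁ (a - b) = 0 → ((a : A) - (b : A)) ∈ Jset D ψ := by
    intro a b h
    have h2 := (hk₁ _).mp h
    simpa using h2
  have hsub₂ : ∀ a b : commutantAlg D, π₂ (a - b) = 0 → ((a : A) - (b : A)) ∈ Jset D φ := by
    intro a b h
    have h2 := (hk₂ _).mp h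
    simpa using h2
  have hf : ∀ a : commutantAlg D, f (π₁ a) = π₂ (C₁ a) := by
    intro a
    apply hπ₂eq
    apply hsub₁
    rw [map_sub, Function.surjInv_eq hs₁, sub_self]
  have hg : ∀ a : commutantAlg D, g (π₂ a) = π₁ (C₂ a) := by
    intro a
    apply hπ₁eq
    apply hsub₂
    rw [map_sub, Function.surjInv_eq hs₂, sub_self]
  have hC₁add : ∀ a b : commutantAlg D, C₁ (a + b) = C₁ a + C₁ b := by
    intro a b
    apply Subtype.ext
    show star m * ((a : A) + (b : A)) * m = star m * (a : A) * m + star m * (b : A) * m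
    rw [mul_add, add_mul]
  have hC₁smul : ∀ (c : ℂ) (a : commutantAlg D), C₁ (c • a) = c • C₁ a := by
    intro c a
    apply Subtype.ext
    show star m * (c • (a : A)) * m = c • (star m * (a : A) * m)
    rw [mul_smul_comm, smul_mul_assoc]
  have hC₁star : ∀ a : commutantAlg D, C₁ (star a) = star (C₁ a) := by
    intro a
    apply Subtype.ext
    show star m * star (a : A) * m = star (star m * (a : A) * m)
    simp only [star_mul, star_star, mul_assoc]
  have hC₁zero : C₁ 0 = 0 := by
    apply Subtype.ext
    show star m * (0 : A) * m = 0
    simp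
  have hfadd : ∀ q q', f (q + q') = f q + f q' := by
    intro q q'
    obtain ⟨a, rfl⟩ := hs₁ q
    obtain ⟨a', rfl⟩ := hs₁ q'
    rw [← map_add, hf, hf, hf, hC₁add, map_add]
  have hfsmul : ∀ (c : ℂ) (q : Q₁), f (c • q) = c • f q := by
    intro c q
    obtain ⟨a, rfl⟩ := hs₁ q
    rw [← map_smul, hf, hf, hC₁smul, map_smul]
  have hfstar : ∀ q, f (star q) = star (f q) := by
    intro q
    obtain ⟨a, rfl⟩ := hs₁ q
    rw [← map_star, hf, hf, hC₁star, map_star]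
  have hfzero : f 0 = 0 := by
    rw [← map_zero π₁, hf, hC₁zero, map_zero]
  have hfmul : ∀ q q', f (q * q') = f q * f q' := by
    intro q q'
    obtain ⟨a, rfl⟩ := hs₁ q
    obtain ⟨a', rfl⟩ := hs₁ q'
    rw [← map_mul, hf, hf, hf, ← map_mul]
    have h0 : π₂ (C₁ a * C₁ a' - C₁ (a * a')) = 0 := by
      rw [hk₂]
      have hc : ((C₁ a * C₁ a' - C₁ (a * a') : commutantAlg D) : A)
          = (star m * ((a : A) * (a' : A)) * m) * (star m * m)
            - star m * ((a : A) * (a' : A)) * m := by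
        show (star m * (a : A) * m) * (star m * (a' : A) * m)
            - star m * ((a : A) * (a' : A)) * m = _
        congr 1
        calc (star m * (a : A) * m) * (star m * (a' : A) * m)
            = star m * (a : A) * ((m * star m) * (a' : A)) * m := by simp only [mul_assoc]
          _ = star m * (a : A) * ((a' : A) * (m * star m)) * m := by rw [← a'.2 _ hmmD']
          _ = (star m * ((a : A) * (a' : A)) * m) * (star m * m) := by simp only [mul_assoc]
      rw [hc]
      exact cancelφ' _ (part1 _ (commutant_mul D a.2 a'.2))
    rw [map_sub] at h0
    exact (sub_eq_zero.mp h0).symm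
  have hgf : ∀ q, g (f q) = q := by
    intro q
    obtain ⟨a, rfl⟩ := hs₁ q
    rw [hf, hg]
    have h0 : π₁ (C₂ (C₁ a) - a) = 0 := by
      rw [hk₁]
      have hc : ((C₂ (C₁ a) - a : commutantAlg D) : A)
          = ((m * star m) * ((a : A) * (m * star m)) - (a : A) * (m * star m))
            + ((a : A) * (m * star m) - (a : A)) := by
        show m * (star m * (a : A) * m) * star m - (a : A) = _
        have he : m * (star m * (a : A) * m) * star m
            = (m * star m) * ((a : A) * (m * star m)) := by
          simp only [mul_assoc]
        rw [he]; abel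
      rw [hc]
      exact Jset_add D ψ (cancelψ _ (commutant_mul D a.2 (hDsub _ hmmD'))) (cancelψ' _ a.2)
    rw [map_sub] at h0
    exact sub_eq_zero.mp h0
  have hfg : ∀ q, f (g q) = q := by
    intro q
    obtain ⟨a, rfl⟩ := hs₂ q
    rw [hg, hf]
    have h0 : π₂ (C₁ (C₂ a) - a) = 0 := by
      rw [hk₂]
      have hc : ((C₁ (C₂ a) - a : commutantAlg D) : A)
          = ((star m * m) * ((a : A) * (star m * m)) - (a : A) * (star m * m))
            + ((a : A) * (star m * m) - (a : A)) := by
        show star m * (m * (a : A) * star m) * m - (a : A) = _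
        have he : star m * (m * (a : A) * star m) * m
            = (star m * m) * ((a : A) * (star m * m)) := by
          simp only [mul_assoc]
        rw [he]; abel
      rw [hc]
      exact Jset_add D φ (cancelφ _ (commutant_mul D a.2 (hDsub _ hmmD))) (cancelφ' _ a.2)
    rw [map_sub] at h0
    exact sub_eq_zero.mp h0
  let F : Q₁ →⋆ₙₐ[ℂ] Q₂ :=
    { toFun := f
      map_smul' := hfsmul
      map_zero' := hfzero
      map_add' := hfadd
      map_mul' := hfmul
      map_star' := hfstar }
  have hbij : Function.Bijective F :=
    ⟨Function.LeftInverse.injective hgf, Function.RightInverse.surjective hfg⟩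
  refine ⟨StarAlgEquiv.ofBijective F hbij, ?_⟩
  intro a b hb
  have hba : b = C₁ a := Subtype.ext (by rw [hb])
  rw [hba, StarAlgEquiv.ofBijective_apply]
  exact hf a
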